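/- Let T : S → T' be a triangulated functor between pretriangulated categories and A a subring of ℚ. Then T is fully faithful if and only if the following two conditions hold: (i) for all A-torsion objects X, Y of S, the map Hom_S(X, Y) → Hom_{T'}(T X, T Y) induced by T is bijective; (ii) for all objects X, Y of S, the map Hom_S(X, Y) ⊗_ℤ A → Hom_{T'}(T X, T Y) ⊗_ℤ A induced by T is bijective. -/

import Mathlib

open CategoryTheory Limits Pretriangulated

/-- An object `X` is `A`-torsion if `n • 𝟙 X = 0` for some nonzero integer `n`
invertible in `A`. -/
def IsATorsion (A : Subring ℚ) {C : Type*} [Category C] [Preadditive C] (X : C) : Prop :=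
  ∃ n : ℤ, n ≠ 0 ∧ IsUnit (n : A) ∧ (n : ℤ) • 𝟙 X = 0

namespace B24

open TensorProduct

/-! ### Algebraic preliminaries: subrings of `ℚ` are localizations of `ℤ`. -/

/-- The submonoid of integers invertible in `A`. -/
def invMonoid (A : Subring ℚ) : Submonoid ℤ where
  carrier := {n : ℤ | IsUnit (n : A)}
  one_mem' := by simp
  mul_mem' := by
    intro a b ha hb
    simpa using ha.mul hb

lemma mem_invMonoid {A : Subring ℚ} {n : ℤ} : n ∈ invMonoid A ↔ IsUnit (n : A) := Iff.rfl

lemma invMonoid_ne_zero (A : Subring ℚ) {n : ℤ} (hn : n ∈ invMonoid A) : n ≠ 0 := by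
  rintro rfl
  have : IsUnit ((0 : ℤ) : A) := hn
  rw [Int.cast_zero, isUnit_zero_iff] at this
  exact zero_ne_one this

lemma coe_intCast (A : Subring ℚ) (n : ℤ) : ((n : A) : ℚ) = n := by push_cast; rfl

lemma den_isUnit (A : Subring ℚ) (a : A) : IsUnit (((a : ℚ).den : ℤ) : A) := by
  set q : ℚ := (a : ℚ) with hq
  have hcop : IsCoprime (q.num) (q.den : ℤ) := by
    rw [Int.isCoprime_iff_gcd_eq_one]
    exact q.reduced
  obtain ⟨u, v, huv⟩ := hcop
  refine IsUnit.of_mul_eq_one ((u : A) * a + (v : A)) ?_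
  apply Subtype.ext
  push_cast [coe_intCast]
  have hden : (q.den : ℚ) * q = q.num := by
    rw [mul_comm, Rat.mul_den_eq_num]
  calc (q.den : ℚ) * ((u:ℚ) * q + v) = u * ((q.den : ℚ) * q) + v * q.den := by ring
    _ = u * q.num + v * q.den := by rw [hden]
    _ = 1 := by exact_mod_cast huv

instance instLocInv (A : Subring ℚ) : IsLocalization (invMonoid A) A where
  map_units := by
    rintro ⟨s, hs⟩
    simpa [algebraMap_int_eq, eq_intCast, mem_invMonoid] using hs
  surj := by
    intro a
    refine ⟨⟨(a : ℚ).num, ⟨(a : ℚ).den, den_isUnit A a⟩⟩, ?_⟩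
    apply Subtype.ext
    push_cast [algebraMap_int_eq, eq_intCast, coe_intCast]
    rw [mul_comm, ← Rat.mul_den_eq_num]
    ring
  exists_of_eq := by
    intro x y h
    refine ⟨1, ?_⟩
    have : ((x : A) : ℚ) = ((y : A) : ℚ) := by
      simpa [algebraMap_int_eq, eq_intCast] using congrArg (fun t : A => (t : ℚ)) h
    rw [coe_intCast, coe_intCast] at this
    exact_mod_cast congrArg (1 * ·) (Int.cast_injective (α := ℚ) this)

section Modules

variable (A : Subring ℚ) {M N : Type*} [AddCommGroup M] [AddCommGroup N]

/-- The canonical map `M → A ⊗ M`. -/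
noncomputable def toTensor : M →ₗ[ℤ] (↥A ⊗[ℤ] M) := TensorProduct.mk ℤ ↥A M 1

instance instLocMod : IsLocalizedModule (invMonoid A) (toTensor A (M := M)) :=
  (isLocalizedModule_iff_isBaseChange (invMonoid A) ↥A _).mpr
    (TensorProduct.isBaseChange ℤ M ↥A)

lemma comm_rTensor (ψ : M →ₗ[ℤ] N) (x : M ⊗[ℤ] ↥A) :
    (TensorProduct.comm ℤ N ↥A) (LinearMap.rTensor ↥A ψ x)
      = LinearMap.lTensor ↥A ψ ((TensorProduct.comm ℤ M ↥A) x) := by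
  have := TensorProduct.ext' (R := ℤ) (M := M) (N := ↥A) (P₂ := ↥A ⊗[ℤ] N)
    (g := (TensorProduct.comm ℤ N ↥A).toLinearMap ∘ₗ LinearMap.rTensor ↥A ψ)
    (h := LinearMap.lTensor ↥A ψ ∘ₗ (TensorProduct.comm ℤ M ↥A).toLinearMap)
    (fun m a => rfl)
  exact DFunLike.congr_fun this x

lemma exists_smul_eq_zero_of_tmul {x : M} (h : x ⊗ₜ (1 : ↥A) = (0 : M ⊗[ℤ] ↥A)) :
    ∃ n ∈ invMonoid A, n • x = 0 := by
  have h1 : toTensor A x = 0 := by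
    have h2 := congrArg (TensorProduct.comm ℤ M ↥A) h
    rw [(TensorProduct.comm ℤ M ↥A).map_zero] at h2
    simp at h2
    exact h2
  obtain ⟨s, hs⟩ := (IsLocalizedModule.eq_zero_iff (invMonoid A) (toTensor A)).mp h1
  exact ⟨(s : ℤ), s.2, hs⟩

lemma exists_smul_mem_range (ψ : M →ₗ[ℤ] N)
    (hsurj : Function.Surjective (LinearMap.rTensor ↥A ψ)) (u : N) :
    ∃ n ∈ invMonoid A, ∃ m : M, ψ m = n • u := by
  have hl : Function.Surjective (LinearMap.lTensor ↥A ψ) := by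
    intro y
    obtain ⟨x, hx⟩ := hsurj ((TensorProduct.comm ℤ N ↥A).symm y)
    refine ⟨TensorProduct.comm ℤ M ↥A x, ?_⟩
    rw [← comm_rTensor, hx]
    simp
  obtain ⟨t, ht⟩ := hl (toTensor A u)
  obtain ⟨⟨m, s⟩, hms⟩ := IsLocalizedModule.surj (invMonoid A) (toTensor A (M := M)) t
  have key : toTensor A ((s : ℤ) • u) = toTensor A (ψ m) := by
    have h1 : (LinearMap.lTensor ↥A ψ) ((s : ℤ) • t) = (s : ℤ) • toTensor A u := by
      rw [map_smul, ht]
    have h2 : (s : ℤ) • t = toTensor A m := by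
      rw [← hms]; simp [Submonoid.smul_def]
    rw [h2] at h1
    have h3 : (LinearMap.lTensor ↥A ψ) (toTensor A m) = toTensor A (ψ m) := by
      show LinearMap.lTensor ↥A ψ ((1 : ↥A) ⊗ₜ[ℤ] m) = (1 : ↥A) ⊗ₜ[ℤ] ψ m
      simp
    rw [h3] at h1
    rw [map_smul]
    exact h1.symm
  obtain ⟨c, hc⟩ := IsLocalizedModule.exists_of_eq (S := invMonoid A)
    (f := toTensor A (M := N)) key
  refine ⟨(c : ℤ) * (s : ℤ), mul_mem c.2 s.2, (c : ℤ) • m, ?_⟩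
  rw [map_smul]
  rw [Submonoid.smul_def, Submonoid.smul_def] at hc
  rw [← hc, smul_smul]

lemma rTensor_bijective_of_bijective (ψ : M →ₗ[ℤ] N) (h : Function.Bijective ψ) :
    Function.Bijective (LinearMap.rTensor ↥A ψ) := by
  let e := LinearEquiv.ofBijective ψ h
  let r := LinearMap.rTensor ↥A (e.symm.toLinearMap)
  have h1 : r ∘ₗ LinearMap.rTensor ↥A ψ = LinearMap.id := by
    rw [← LinearMap.rTensor_comp]
    have : e.symm.toLinearMap ∘ₗ ψ = LinearMap.id :=
      LinearMap.ext fun x => e.symm_apply_apply x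
    rw [this, LinearMap.rTensor_id]
  have h2 : LinearMap.rTensor ↥A ψ ∘ₗ r = LinearMap.id := by
    rw [← LinearMap.rTensor_comp]
    have : ψ ∘ₗ e.symm.toLinearMap = LinearMap.id :=
      LinearMap.ext fun x => e.apply_symm_apply x
    rw [this, LinearMap.rTensor_id]
  constructor
  · intro a b hab
    have ha := DFunLike.congr_fun h1 a
    have hb := DFunLike.congr_fun h1 b
    simp only [LinearMap.coe_comp, Function.comp_apply, LinearMap.id_coe, id_eq] at ha hb
    rw [← ha, ← hb, hab]
  · intro y
    exact ⟨r y, DFunLike.congr_fun h2 y⟩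

end Modules

/-! ### Categorical lemmas -/

section Cat

variable (A : Subring ℚ) {S : Type*} {T' : Type*} [Category S] [Category T']
    [HasZeroObject S] [HasZeroObject T'] [Preadditive S] [Preadditive T']
    [HasShift S ℤ] [HasShift T' ℤ]
    [∀ n : ℤ, (CategoryTheory.shiftFunctor S n).Additive]
    [∀ n : ℤ, (CategoryTheory.shiftFunctor T' n).Additive]
    [Pretriangulated S] [Pretriangulated T']
    (T : S ⥤ T') [T.Additive] [T.CommShift ℤ] [T.IsTriangulated]

lemma torsion_shift {X : S} (h : IsATorsion A X) (k : ℤ) :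
    IsATorsion A ((CategoryTheory.shiftFunctor S k).obj X) := by
  obtain ⟨n, hn0, hnu, hn⟩ := h
  refine ⟨n, hn0, hnu, ?_⟩
  rw [← (CategoryTheory.shiftFunctor S k).map_id, ← Functor.map_zsmul, hn, Functor.map_zero]

lemma cone_torsion {n : ℤ} (hn0 : n ≠ 0) (hnu : IsUnit ((n : ℤ) : A)) {X W : S}
    {a : X ⟶ W} {b : W ⟶ X⟦(1 : ℤ)⟧}
    (hdist : Triangle.mk ((n : ℤ) • 𝟙 X) a b ∈ distTriang S) : IsATorsion A W := by
  refine ⟨n * n, mul_ne_zero hn0 hn0, by push_cast; exact hnu.mul hnu, ?_⟩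
  have hb : (n : ℤ) • b = 0 := by
    have h1 := comp_distTriang_mor_zero₃₁ _ hdist
    have h2 : b ≫ ((n : ℤ) • 𝟙 X)⟦(1 : ℤ)⟧' = (n : ℤ) • b := by
      rw [Functor.map_zsmul, (CategoryTheory.shiftFunctor S (1 : ℤ)).map_id,
        Preadditive.comp_zsmul, Category.comp_id]
    rw [← h2]
    exact h1
  obtain ⟨c, hc⟩ := Triangle.coyoneda_exact₂ _ (rot_of_distTriang _ hdist)
    ((n : ℤ) • 𝟙 W) (by
      show ((n : ℤ) • 𝟙 W) ≫ b = 0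
      rw [Preadditive.zsmul_comp, Category.id_comp, hb])
  have hc' : (n : ℤ) • 𝟙 W = c ≫ a := hc
  have ha : (n : ℤ) • a = 0 := by
    have := comp_distTriang_mor_zero₁₂ _ hdist
    have h3 : ((n : ℤ) • 𝟙 X) ≫ a = (n : ℤ) • a := by
      rw [Preadditive.zsmul_comp, Category.id_comp]
    rw [← h3]
    exact this
  rw [mul_smul, hc']
  erw [← Preadditive.comp_zsmul, ha, Limits.comp_zero]

variable {A T} in
lemma claim_surj
    (hi : ∀ (X Y : S), IsATorsion A X → IsATorsion A Y →
      Function.Bijective (fun f : X ⟶ Y => T.map f))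
    (X Z : S) (hZ : IsATorsion A Z) (u : T.obj X ⟶ T.obj Z) :
    ∃ g : X ⟶ Z, T.map g = u := by
  obtain ⟨n, hn0, hnu, hn⟩ := hZ
  obtain ⟨W, a, b, hdist⟩ := Pretriangulated.distinguished_cocone_triangle ((n : ℤ) • 𝟙 X)
  have hmap := T.map_distinguished _ hdist
  have hcond : T.map ((n : ℤ) • 𝟙 X) ≫ u = 0 := by
    have h1 : T.map ((n : ℤ) • 𝟙 X) ≫ u = u ≫ T.map ((n : ℤ) • 𝟙 Z) := by
      rw [T.map_zsmul, T.map_zsmul, T.map_id, T.map_id,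
        Preadditive.zsmul_comp, Preadditive.comp_zsmul, Category.id_comp, Category.comp_id]
    rw [h1, hn, Functor.map_zero, Limits.comp_zero]
  obtain ⟨v, hv⟩ := Triangle.yoneda_exact₂ _ hmap u hcond
  have hv' : u = T.map a ≫ v := hv
  obtain ⟨g, hg⟩ := (hi W Z (cone_torsion A hn0 hnu hdist) ⟨n, hn0, hnu, hn⟩).2 v
  refine ⟨a ≫ g, ?_⟩
  rw [T.map_comp]
  dsimp at hg
  rw [hg, ← hv']

variable {A T} in
lemma claim_inj
    (hi : ∀ (X Y : S), IsATorsion A X → IsATorsion A Y →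
      Function.Bijective (fun f : X ⟶ Y => T.map f))
    (X Z : S) (hZ : IsATorsion A Z) (f : X ⟶ Z) (hf : T.map f = 0) : f = 0 := by
  obtain ⟨n, hn0, hnu, hn⟩ := hZ
  obtain ⟨W, a, b, hdist⟩ := Pretriangulated.distinguished_cocone_triangle ((n : ℤ) • 𝟙 X)
  -- `f` kills `n • 𝟙 X`, hence factors through the cone `W`
  have hcond : ((n : ℤ) • 𝟙 X) ≫ f = 0 := by
    have h1 : ((n : ℤ) • 𝟙 X) ≫ f = f ≫ ((n : ℤ) • 𝟙 Z) := by
      rw [Preadditive.zsmul_comp, Preadditive.comp_zsmul, Category.id_comp, Category.comp_id]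
    rw [h1, hn, Limits.comp_zero]
  obtain ⟨g, hg⟩ := Triangle.yoneda_exact₂ _ hdist f hcond
  have hg' : f = a ≫ g := hg
  -- in the target category, `T.map g` factors through `T.map b`
  have hmap := T.map_distinguished _ (rot_of_distTriang _ hdist)
  have hcond2 : T.map a ≫ T.map g = 0 := by
    erw [← T.map_comp]
    rw [← hg', hf]
  obtain ⟨w, hw⟩ := Triangle.yoneda_exact₂ _ hmap (T.map g) hcond2
  have hw' : T.map g = T.map b ≫ w := hw
  obtain ⟨w', hw''⟩ := claim_surj hi (X⟦(1 : ℤ)⟧) Z ⟨n, hn0, hnu, hn⟩ w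
  have : T.map g = T.map (b ≫ w') := by rw [T.map_comp, hw'', ← hw']
  have hgb : g = b ≫ w' := (hi W Z (cone_torsion A hn0 hnu hdist) ⟨n, hn0, hnu, hn⟩).1 this
  have hba : a ≫ b = 0 := comp_distTriang_mor_zero₂₃ _ hdist
  rw [hg', hgb, ← Category.assoc, hba, Limits.zero_comp]

variable {A T} in
lemma claim_inj2
    (hi : ∀ (X Y : S), IsATorsion A X → IsATorsion A Y →
      Function.Bijective (fun f : X ⟶ Y => T.map f))
    (X Z : S) (hZ : IsATorsion A Z) (f g : X ⟶ Z) (hf : T.map f = T.map g) : f = g := by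
  have h1 : T.map (f - g) = 0 := by rw [T.map_sub, hf, sub_self]
  have h2 := claim_inj hi X Z hZ _ h1
  rwa [sub_eq_zero] at h2

variable {A T} in
lemma alpha
    (hi : ∀ (X Y : S), IsATorsion A X → IsATorsion A Y →
      Function.Bijective (fun f : X ⟶ Y => T.map f))
    {X Y : S} {n : ℤ} (hn0 : n ≠ 0) (hnu : IsUnit ((n : ℤ) : A))
    (v : X ⟶ Y) (u : T.obj X ⟶ T.obj Y) (huv : T.map v = (n : ℤ) • u) :
    ∃ v' : X ⟶ Y, v = (n : ℤ) • v' := by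
  obtain ⟨W, δ, σ, hdist⟩ := Pretriangulated.distinguished_cocone_triangle ((n : ℤ) • 𝟙 Y)
  have hnδ : ((n : ℤ) • 𝟙 Y) ≫ δ = 0 := comp_distTriang_mor_zero₁₂ _ hdist
  have h1 : T.map (v ≫ δ) = 0 := by
    rw [T.map_comp, huv, Preadditive.zsmul_comp, ← Preadditive.comp_zsmul,
      ← T.map_zsmul]
    have : (n : ℤ) • δ = 0 := by
      rw [← hnδ, Preadditive.zsmul_comp, Category.id_comp]
    rw [this, Functor.map_zero, Limits.comp_zero]
  have h2 : v ≫ δ = 0 := claim_inj hi X W (cone_torsion A hn0 hnu hdist) _ h1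
  obtain ⟨v', hv'⟩ := Triangle.coyoneda_exact₂ _ hdist v h2
  refine ⟨v', ?_⟩
  have : v = v' ≫ ((n : ℤ) • 𝟙 Y) := hv'
  rw [this]
  erw [Preadditive.comp_zsmul, Category.comp_id]

variable {A T} in
lemma gamma
    (hi : ∀ (X Y : S), IsATorsion A X → IsATorsion A Y →
      Function.Bijective (fun f : X ⟶ Y => T.map f))
    {X Y : S} {n : ℤ} (hn0 : n ≠ 0) (hnu : IsUnit ((n : ℤ) : A))
    (u : T.obj X ⟶ T.obj Y) (hu : (n : ℤ) • u = 0) :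
    ∃ g : X ⟶ Y, T.map g = u := by
  obtain ⟨W, δ, σ, hdist⟩ := Pretriangulated.distinguished_cocone_triangle ((n : ℤ) • 𝟙 Y)
  set D := Triangle.mk ((n : ℤ) • 𝟙 Y) δ σ with hD
  have hE : D.invRotate ∈ distTriang S := inv_rot_of_distTriang _ hdist
  have hmapE := T.map_distinguished _ hE
  have hcond : u ≫ T.map D.invRotate.mor₂ = 0 := by
    show u ≫ T.map ((n : ℤ) • 𝟙 Y) = 0
    rw [T.map_zsmul, T.map_id, Preadditive.comp_zsmul, Category.comp_id, hu]
  obtain ⟨h, hh⟩ := Triangle.coyoneda_exact₂ _ hmapE u hcond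
  have hW : IsATorsion A D.invRotate.obj₁ :=
    torsion_shift A (cone_torsion A hn0 hnu hdist) (-1)
  obtain ⟨h', hh'⟩ := claim_surj hi X D.invRotate.obj₁ hW h
  refine ⟨h' ≫ D.invRotate.mor₁, ?_⟩
  erw [T.map_comp]
  rw [hh']
  exact hh.symm

variable {A T} in
lemma tfull
    (hi : ∀ (X Y : S), IsATorsion A X → IsATorsion A Y →
      Function.Bijective (fun f : X ⟶ Y => T.map f))
    (hii : ∀ (X Y : S), Function.Bijective
      (LinearMap.rTensor (↥A)
        (AddMonoidHom.toIntLinearMap (T.mapAddHom (X := X) (Y := Y)))))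
    (X Y : S) (u : T.obj X ⟶ T.obj Y) : ∃ f : X ⟶ Y, T.map f = u := by
  obtain ⟨n, hnm, m, hm⟩ := exists_smul_mem_range A
    (AddMonoidHom.toIntLinearMap (T.mapAddHom (X := X) (Y := Y))) (hii X Y).2 u
  have hn0 := invMonoid_ne_zero A hnm
  have hnu : IsUnit ((n : ℤ) : A) := hnm
  have hm' : T.map m = (n : ℤ) • u := hm
  obtain ⟨v', hv'⟩ := alpha hi hn0 hnu m u hm'
  have h0 : (n : ℤ) • (u - T.map v') = 0 := by
    rw [smul_sub, ← hm', hv', T.map_zsmul, sub_self]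
  obtain ⟨g, hg⟩ := gamma hi hn0 hnu (u - T.map v') h0
  refine ⟨v' + g, ?_⟩
  rw [T.map_add, hg]
  abel

variable {A T} in
lemma tfaithful
    (hi : ∀ (X Y : S), IsATorsion A X → IsATorsion A Y →
      Function.Bijective (fun f : X ⟶ Y => T.map f))
    (hii : ∀ (X Y : S), Function.Bijective
      (LinearMap.rTensor (↥A)
        (AddMonoidHom.toIntLinearMap (T.mapAddHom (X := X) (Y := Y)))))
    {X Y : S} (f : X ⟶ Y) (hf : T.map f = 0) : f = 0 := by
  -- first, `n • f = 0` for some `n` invertible in `A`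
  have htens : f ⊗ₜ (1 : ↥A) = (0 : (X ⟶ Y) ⊗[ℤ] ↥A) := by
    apply (hii X Y).1
    rw [map_zero, LinearMap.rTensor_tmul]
    have : (AddMonoidHom.toIntLinearMap (T.mapAddHom (X := X) (Y := Y))) f = 0 := hf
    rw [this, TensorProduct.zero_tmul]
  obtain ⟨n, hnm, hn⟩ := exists_smul_eq_zero_of_tmul A htens
  have hn0 := invMonoid_ne_zero A hnm
  have hnu : IsUnit ((n : ℤ) : A) := hnm
  -- `f` factors through the `-1`-shift of the cone of `n • 𝟙 Y`
  obtain ⟨W, δ, σ, hdist⟩ := Pretriangulated.distinguished_cocone_triangle ((n : ℤ) • 𝟙 Y)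
  set D := Triangle.mk ((n : ℤ) • 𝟙 Y) δ σ with hD
  have hE : D.invRotate ∈ distTriang S := inv_rot_of_distTriang _ hdist
  have hcond : f ≫ D.invRotate.mor₂ = 0 := by
    show f ≫ ((n : ℤ) • 𝟙 Y) = 0
    rw [Preadditive.comp_zsmul, Category.comp_id, hn]
  obtain ⟨h, hh⟩ := Triangle.coyoneda_exact₂ _ hE f hcond
  have hWt : IsATorsion A D.invRotate.obj₁ :=
    torsion_shift A (cone_torsion A hn0 hnu hdist) (-1)
  -- now factor `T.map h`, working with the doubly inverse-rotated triangle `G`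
  have hG : D.invRotate.invRotate ∈ distTriang S := inv_rot_of_distTriang _ hE
  have hmapG := T.map_distinguished _ hG
  have hh2 : f = h ≫ D.invRotate.invRotate.mor₂ := hh
  have hcond2 : T.map h ≫ T.map D.invRotate.invRotate.mor₂ = 0 := by
    erw [← T.map_comp]
    rw [← hh2]
    exact hf
  obtain ⟨k, hk⟩ := Triangle.coyoneda_exact₂ _ hmapG (T.map h) hcond2
  obtain ⟨k', hk'⟩ := tfull hi hii X D.invRotate.invRotate.obj₁ k
  have h1 : T.map h = T.map (k' ≫ D.invRotate.invRotate.mor₁) := by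
    rw [T.map_comp, hk']
    exact hk
  have h2 : h = k' ≫ D.invRotate.invRotate.mor₁ :=
    claim_inj2 hi X D.invRotate.invRotate.obj₂ hWt _ _ h1
  have h5 : D.invRotate.invRotate.mor₁ ≫ D.invRotate.invRotate.mor₂ = 0 :=
    comp_distTriang_mor_zero₁₂ _ hG
  rw [hh2, h2]
  erw [Category.assoc, h5, Limits.comp_zero]
  rfl

end Cat

end B24

/-- Proposition B.2.4 a): a triangulated functor `T` between pretriangulated categories is
fully faithful iff (i) it is bijective on Hom groups between `A`-torsion objects, and
(ii) it is bijective on Hom groups tensored with `A`. -/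
theorem stmt_4 (A : Subring ℚ) {S : Type*} {T' : Type*} [Category S] [Category T']
    [HasZeroObject S] [HasZeroObject T'] [Preadditive S] [Preadditive T']
    [HasShift S ℤ] [HasShift T' ℤ]
    [∀ n : ℤ, (CategoryTheory.shiftFunctor S n).Additive]
    [∀ n : ℤ, (CategoryTheory.shiftFunctor T' n).Additive]
    [Pretriangulated S] [Pretriangulated T']
    (T : S ⥤ T') [T.Additive] [T.CommShift ℤ] [T.IsTriangulated] :
    (T.Full ∧ T.Faithful) ↔
      ((∀ (X Y : S), IsATorsion A X → IsATorsion A Y →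
          Function.Bijective (fun f : X ⟶ Y => T.map f)) ∧
       (∀ (X Y : S), Function.Bijective
          (LinearMap.rTensor (↥A)
            (AddMonoidHom.toIntLinearMap (T.mapAddHom (X := X) (Y := Y)))))) := by
  constructor
  · rintro ⟨hfull, hfaith⟩
    haveI := hfull
    haveI := hfaith
    constructor
    · intro X Y _ _
      exact ⟨fun a b h => T.map_injective h, fun u => T.map_surjective u⟩
    · intro X Y
      exact B24.rTensor_bijective_of_bijective A _
        ⟨fun a b h => T.map_injective h, fun u => T.map_surjective u⟩
  · rintro ⟨hi, hii⟩
    have hfaith : T.Faithful := by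
      refine ⟨fun {X Y} a b hab => ?_⟩
      have h1 : T.map (a - b) = 0 := by rw [T.map_sub, hab, sub_self]
      have h2 := B24.tfaithful hi hii (a - b) h1
      rwa [sub_eq_zero] at h2
    have hfull : T.Full := by
      refine ⟨fun {X Y} u => ?_⟩
      obtain ⟨f, hf⟩ := B24.tfull hi hii X Y u
      exact ⟨f, hf⟩
    exact ⟨hfull, hfaith⟩
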